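/- Suspension case of the star operation: let b ∈ ℂ[s] be nonzero and r ≥ 2, and set c(t) = ∏_{i=1}^{r-1} (t + i/r). If no two roots of b differ by j/r for any j = 1,…,r−1, then (b * c)(s) = ∏_{i=1}^{r-1} b(s + i/r). -/

import Mathlib

open Polynomial in
open scoped Classical in
/-- The star operation: the monic polynomial whose roots are the pairwise sums of roots
of `a` and `b`, where the multiplicity of `γ` is
`max { rootMultiplicity ρ a + rootMultiplicity σ b - 1 : ρ + σ = γ }`.
If `a` or `b` has no roots (e.g. is a nonzero constant), the product is empty and
`pstar a b = 1`. -/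
noncomputable def pstar (a b : Polynomial ℂ) : Polynomial ℂ :=
  ∏ γ ∈ (a.roots.toFinset ×ˢ b.roots.toFinset).image (fun p => p.1 + p.2),
    (X - C γ) ^
      (((a.roots.toFinset ×ˢ b.roots.toFinset).filter (fun p => p.1 + p.2 = γ)).sup
        (fun p => a.rootMultiplicity p.1 + b.rootMultiplicity p.2 - 1))

open Polynomial in
/-- Suspension case: let `b ∈ ℂ[s]` be nonzero (and monic, as is every
reduced Bernstein–Sato polynomial and every star product), `r ≥ 2`, and
`c(t) = ∏_{i=1}^{r-1} (t + i/r)`.  If no two roots of `b` differ by `j/r` for any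
`j = 1, …, r-1`, then `(b * c)(s) = ∏_{i=1}^{r-1} b(s + i/r)`. -/
theorem stmt18 (b : Polynomial ℂ) (hb : b ≠ 0) (hmonic : b.Monic) (r : ℕ) (hr : 2 ≤ r)
    (hsep : ∀ ρ σ : ℂ, b.IsRoot ρ → b.IsRoot σ →
      ∀ j ∈ Finset.Icc 1 (r - 1), ρ - σ ≠ (j : ℂ) / r) :
    pstar b (∏ i ∈ Finset.Icc 1 (r - 1), (X + C ((i : ℂ) / r))) =
      ∏ i ∈ Finset.Icc 1 (r - 1), b.comp (X + C ((i : ℂ) / r)) := by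
  classical
  set I := Finset.Icc 1 (r - 1) with hI
  have hrC : (r : ℂ) ≠ 0 := Nat.cast_ne_zero.mpr (by omega)
  set f : ℕ → ℂ := fun i => -((i : ℂ) / r) with hf
  have hfinj : Function.Injective f := by
    intro i j h
    have h2 : (i : ℂ) / r = (j : ℂ) / r := neg_injective h
    field_simp at h2
    exact_mod_cast h2
  set c : Polynomial ℂ := ∏ i ∈ I, (X + C ((i : ℂ) / r)) with hc
  have hc' : c = ∏ i ∈ I, (X - C (f i)) := by
    simp [hc, hf, sub_neg_eq_add]
  have hcne : c ≠ 0 := by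
    rw [hc']
    exact Finset.prod_ne_zero_iff.mpr fun i _ => X_sub_C_ne_zero _
  have hcroots : c.roots = I.val.map f := by
    rw [hc', roots_prod _ _ (hc' ▸ hcne)]
    simp_rw [roots_X_sub_C]
    rw [Multiset.bind_singleton]
  have hnodup : (I.val.map f).Nodup := I.nodup.map hfinj
  have hct : c.roots.toFinset = I.image f := by
    ext x
    simp [hcroots, Finset.mem_image]
  have hcm : ∀ i ∈ I, c.rootMultiplicity (f i) = 1 := by
    intro i hi
    rw [← count_roots, hcroots]
    exact Multiset.count_eq_one_of_mem hnodup (Multiset.mem_map_of_mem f hi)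
  -- key: the sum map is injective on pairs
  have key : ∀ i ∈ I, ∀ j ∈ I, ∀ ρ σ : ℂ, b.IsRoot ρ → b.IsRoot σ →
      ρ + f i = σ + f j → i = j := by
    intro i hi j hj ρ σ hρ hσ h
    by_contra hne
    rcases Nat.lt_or_ge i j with hij | hij
    · -- σ - ρ = (j - i)/r
      apply hsep σ ρ hσ hρ (j - i) ?_ ?_
      · simp only [hI, Finset.mem_Icc] at hi hj ⊢
        omega
      · have : σ - ρ = f i - f j := by linear_combination -h
        rw [this, hf]
        have hcast : ((j - i : ℕ) : ℂ) = (j : ℂ) - (i : ℂ) := by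
          push_cast [Nat.cast_sub hij.le]
          ring
        rw [hcast]
        ring
    · have hij' : j < i := by omega
      apply hsep ρ σ hρ hσ (i - j) ?_ ?_
      · simp only [hI, Finset.mem_Icc] at hi hj ⊢
        omega
      · have : ρ - σ = f j - f i := by linear_combination h
        rw [this, hf]
        have hcast : ((i - j : ℕ) : ℂ) = (i : ℂ) - (j : ℂ) := by
          push_cast [Nat.cast_sub hij'.le]
          ring
        rw [hcast]
        ring
  set S := b.roots.toFinset ×ˢ c.roots.toFinset with hS
  have hmemc : ∀ σ ∈ c.roots.toFinset, ∃ i ∈ I, f i = σ := by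
    intro σ hσ
    rw [hct] at hσ
    exact Finset.mem_image.mp hσ
  have hinjS : ∀ p ∈ S, ∀ q ∈ S, p.1 + p.2 = q.1 + q.2 → p = q := by
    rintro ⟨ρ, σ⟩ hp ⟨ρ', σ'⟩ hq h
    rw [hS, Finset.mem_product] at hp hq
    obtain ⟨i, hi, rfl⟩ := hmemc σ hp.2
    obtain ⟨j, hj, rfl⟩ := hmemc σ' hq.2
    have hρ : b.IsRoot ρ := isRoot_of_mem_roots (Multiset.mem_toFinset.mp hp.1)
    have hρ' : b.IsRoot ρ' := isRoot_of_mem_roots (Multiset.mem_toFinset.mp hq.1)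
    have hij : i = j := key i hi j hj ρ ρ' hρ hρ' h
    subst hij
    have : ρ = ρ' := by
      have := h
      simpa using this
    simp [this]
  have hfilt : ∀ p ∈ S, (S.filter (fun q => q.1 + q.2 = p.1 + p.2)) = {p} := by
    intro p hp
    ext q
    simp only [Finset.mem_filter, Finset.mem_singleton]
    constructor
    · rintro ⟨hq, h⟩
      exact hinjS q hq p hp h
    · rintro rfl
      exact ⟨hp, rfl⟩
  rw [show pstar b c = ∏ γ ∈ S.image (fun p => p.1 + p.2), (X - C γ) ^
      ((S.filter (fun p => p.1 + p.2 = γ)).sup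
        (fun p => b.rootMultiplicity p.1 + c.rootMultiplicity p.2 - 1)) from by
    unfold pstar; rfl]
  rw [Finset.prod_image hinjS]
  have step1 : ∀ p ∈ S,
      (X - C (p.1 + p.2)) ^ ((S.filter (fun q => q.1 + q.2 = p.1 + p.2)).sup
        (fun q => b.rootMultiplicity q.1 + c.rootMultiplicity q.2 - 1))
      = (X - C (p.1 + p.2)) ^ (b.rootMultiplicity p.1) := by
    intro p hp
    rw [hfilt p hp, Finset.sup_singleton]
    congr 1
    rw [hS, Finset.mem_product] at hp
    obtain ⟨i, hi, hfi⟩ := hmemc p.2 hp.2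
    rw [← hfi, hcm i hi]
    omega
  rw [Finset.prod_congr rfl step1]
  rw [hS, Finset.prod_product]
  rw [Finset.prod_comm]
  rw [hct, Finset.prod_image (fun i _ j _ h => hfinj h)]
  -- now LHS = ∏ i ∈ I, ∏ ρ ∈ b.roots.toFinset, (X - C (ρ + f i)) ^ rootMultiplicity ρ b
  refine Finset.prod_congr rfl fun i hi => ?_
  have hbsplit : b = (b.roots.map fun a => X - C a).prod :=
    ((IsAlgClosed.splits b).eq_prod_roots_of_monic hmonic)
  conv_rhs => rw [hbsplit]
  rw [multiset_prod_comp, Multiset.map_map]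
  have hcomp : ∀ a : ℂ, (X - C a).comp (X + C ((i : ℂ) / r)) = X - C (a + f i) := by
    intro a
    simp only [sub_comp, X_comp, C_comp, hf, map_add, map_neg]
    ring
  simp only [Function.comp, hcomp]
  rw [Finset.prod_multiset_map_count]
  refine Finset.prod_congr rfl fun ρ hρ => ?_
  rw [count_roots]
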